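/- Let d ≥ 2, n ≥ 2, let ω : ℝ → ℝ^d be C^1, let k_2, …, k_n ∈ ℤ^{d−1} and let φ_2, …, φ_n : ℝ → ℝ be C^1. Define H_n(θ, r) = ⟨ω(r_d), r⟩ − Σ_{j=2}^n φ_j(r_d) sin(2π⟨k_j, θ̃⟩). Fix (θ_0, r_0) ∈ ℝ^d × ℝ^d and set s = (r_0)_d. Then the solution of Hamilton's equations for H_n with initial condition (θ_0, r_0) is defined for all t ∈ ℝ and satisfies: θ̃(t) = θ̃_0 + t ω̃(s), r_d(t) = s, and r̃(t) = r̃_0 + Σ_{j=2}^n φ_j(s) ψ_j(t) k_j, where ψ_j(t) = [sin(2π⟨k_j, θ̃_0⟩ + 2πt⟨ω̃(s), k_j⟩) − sin(2π⟨k_j, θ̃_0⟩)] / ⟨ω̃(s), k_j⟩ if ⟨ω̃(s), k_j⟩ ≠ 0, and ψ_j(t) = 2πt cos(2π⟨k_j, θ̃_0⟩) if ⟨ω̃(s), k_j⟩ = 0. -/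

import Mathlib

open Real Filter Set

noncomputable section

/-- The phase space `T^d × ℝ^d`, realized as pairs `(θ, r)` of functions `Fin d → ℝ`. -/
abbrev Phase (d : ℕ) := (Fin d → ℝ) × (Fin d → ℝ)

/-- `H` is `ℤ^d`-periodic in the angle variable `θ`. -/
def PeriodicTheta {d : ℕ} (H : Phase d → ℝ) : Prop :=
  ∀ (θ r : Fin d → ℝ) (m : Fin d → ℤ), H (fun i => θ i + (m i : ℝ), r) = H (θ, r)

/-- `H` is real entire: it is the restriction to `ℝ^d × ℝ^d` of a holomorphic
function on `ℂ^d × ℂ^d`. -/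
def RealEntire {d : ℕ} (H : Phase d → ℝ) : Prop :=
  ∃ F : (Fin d → ℂ) × (Fin d → ℂ) → ℂ, Differentiable ℂ F ∧
    ∀ θ r : Fin d → ℝ, F (fun i => (θ i : ℂ), fun i => (r i : ℂ)) = H (θ, r)

/-- `H` is of the form `(*)` with frequency `ω`:
`|H(θ,r) − ⟨ω,r⟩| ≤ C‖r‖²` for all `θ` and all `‖r‖ ≤ δ`. -/
def FormStar {d : ℕ} (H : Phase d → ℝ) (ω : Fin d → ℝ) : Prop :=
  ∃ C δ : ℝ, 0 < C ∧ 0 < δ ∧ ∀ θ r : Fin d → ℝ, ‖r‖ ≤ δ →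
    |H (θ, r) - ∑ i, ω i * r i| ≤ C * ‖r‖ ^ 2

/-- `(θ, r)` is a solution of Hamilton's equations for `H` on the set `J`:
`θ' = ∂H/∂r`, `r' = −∂H/∂θ`. -/
def IsSolutionOn {d : ℕ} (H : Phase d → ℝ) (θ r : ℝ → Fin d → ℝ) (J : Set ℝ) : Prop :=
  ∀ t ∈ J, ∀ i : Fin d,
    HasDerivWithinAt (fun u => θ u i) (fderiv ℝ H (θ t, r t) (0, Pi.single i 1)) J t ∧
    HasDerivWithinAt (fun u => r u i) (-(fderiv ℝ H (θ t, r t) (Pi.single i 1, 0))) J t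

/-- Embedding of the first `d − 1` indices into `Fin d`. -/
def emb (d : ℕ) : Fin (d - 1) → Fin d := Fin.castLE (Nat.sub_le d 1)

/-- The last index of `Fin d`. -/
def lst (d : ℕ) (hd : 0 < d) : Fin d := ⟨d - 1, Nat.sub_lt hd Nat.one_pos⟩

/-- `⟨ω̃(s), k_j⟩ = Σ_{i=1}^{d−1} ω_i(s) k_{j,i}`. -/
def Aj (d : ℕ) (ω : ℝ → Fin d → ℝ) (k : ℕ → Fin (d - 1) → ℤ) (j : ℕ) (s : ℝ) : ℝ :=
  ∑ i, ω s (emb d i) * (k j i : ℝ)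

/-- `H_n(θ, r) = ⟨ω(r_d), r⟩ − Σ_{j=2}^n φ_j(r_d) sin(2π⟨k_j, θ̃⟩)`. -/
def Hn (d n : ℕ) (hd : 0 < d) (ω : ℝ → Fin d → ℝ) (k : ℕ → Fin (d - 1) → ℤ)
    (φ : ℕ → ℝ → ℝ) (z : Phase d) : ℝ :=
  (∑ i, ω (z.2 (lst d hd)) i * z.2 i) -
    ∑ j ∈ Finset.Icc 2 n, φ j (z.2 (lst d hd)) *
      Real.sin (2 * π * ∑ i, (k j i : ℝ) * z.1 (emb d i))

/-- `H_0(θ, r) = ⟨ω(r_d), r⟩`. -/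
def H0 (d : ℕ) (hd : 0 < d) (ω : ℝ → Fin d → ℝ) (z : Phase d) : ℝ :=
  ∑ i, ω (z.2 (lst d hd)) i * z.2 i

/-- The map `Ψ_n(θ, r) = (θ̃, θ_d − (1/2π) Σ_j (d/ds)[φ_j(s)/⟨ω̃(s), k_j⟩] cos(2π⟨k_j, θ̃⟩),
r̃ − Σ_j (φ_j(s)/⟨ω̃(s), k_j⟩) sin(2π⟨k_j, θ̃⟩) k_j, s)`, with `s = r_d`. -/
def Psin (d n : ℕ) (hd : 0 < d) (ω : ℝ → Fin d → ℝ) (k : ℕ → Fin (d - 1) → ℤ)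
    (φ : ℕ → ℝ → ℝ) (z : Phase d) : Phase d :=
  (fun i => if i = lst d hd then
      z.1 (lst d hd) - (1 / (2 * π)) * ∑ j ∈ Finset.Icc 2 n,
        deriv (fun s => φ j s / Aj d ω k j s) (z.2 (lst d hd)) *
          Real.cos (2 * π * ∑ i', (k j i' : ℝ) * z.1 (emb d i'))
    else z.1 i,
   fun i => if h : (i : ℕ) < d - 1 then
      z.2 i - ∑ j ∈ Finset.Icc 2 n,
        (φ j (z.2 (lst d hd)) / Aj d ω k j (z.2 (lst d hd))) *
          Real.sin (2 * π * ∑ i', (k j i' : ℝ) * z.1 (emb d i')) * (k j ⟨i, h⟩ : ℝ)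
    else z.2 i)

/-- The time dependence `ψ_j(t)` of the explicit solution: if `⟨ω̃(s), k_j⟩ ≠ 0` it is
`[sin(2π⟨k_j, θ̃₀⟩ + 2πt⟨ω̃(s), k_j⟩) − sin(2π⟨k_j, θ̃₀⟩)]/⟨ω̃(s), k_j⟩`, and if
`⟨ω̃(s), k_j⟩ = 0` it is `2πt cos(2π⟨k_j, θ̃₀⟩)`. -/
def psiSol (d : ℕ) (ω : ℝ → Fin d → ℝ) (k : ℕ → Fin (d - 1) → ℤ)
    (θ0 : Fin d → ℝ) (s : ℝ) (j : ℕ) (t : ℝ) : ℝ :=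
  if Aj d ω k j s = 0 then
    2 * π * t * Real.cos (2 * π * ∑ i', (k j i' : ℝ) * θ0 (emb d i'))
  else
    (Real.sin (2 * π * ∑ i', (k j i' : ℝ) * θ0 (emb d i') + 2 * π * t * Aj d ω k j s) -
      Real.sin (2 * π * ∑ i', (k j i' : ℝ) * θ0 (emb d i'))) / Aj d ω k j s

/-! ### Auxiliary material for the proof of Statement 17 -/

section Aux

variable {d n : ℕ}

lemma emb_ne_lst (hd : 0 < d) (i : Fin (d - 1)) : emb d i ≠ lst d hd := by
  intro h
  have h1 : (i : ℕ) = d - 1 := congrArg Fin.val h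
  have := i.2
  omega

lemma emb_inj : Function.Injective (emb d) := Fin.castLE_injective _

/-- `⟨k_j, θ̃₀⟩`. -/
def S0 (d : ℕ) (k : ℕ → Fin (d - 1) → ℤ) (θ0 : Fin d → ℝ) (j : ℕ) : ℝ :=
  ∑ i', (k j i' : ℝ) * θ0 (emb d i')

/-- The r-part of the explicit solution. -/
def rSol (d n : ℕ) (hd : 0 < d) (ω : ℝ → Fin d → ℝ) (k : ℕ → Fin (d - 1) → ℤ)
    (φ : ℕ → ℝ → ℝ) (θ0 r0 : Fin d → ℝ) (t : ℝ) (i : Fin d) : ℝ :=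
  if h : (i : ℕ) < d - 1 then
    r0 i + ∑ j ∈ Finset.Icc 2 n, φ j (r0 (lst d hd)) *
      psiSol d ω k θ0 (r0 (lst d hd)) j t * (k j ⟨i, h⟩ : ℝ)
  else r0 i

/-- The derivative of the last angle coordinate along the solution. -/
def gFun (d n : ℕ) (hd : 0 < d) (ω : ℝ → Fin d → ℝ) (k : ℕ → Fin (d - 1) → ℤ)
    (φ : ℕ → ℝ → ℝ) (θ0 r0 : Fin d → ℝ) (t : ℝ) : ℝ :=
  (∑ m, deriv (fun u => ω u m) (r0 (lst d hd)) * rSol d n hd ω k φ θ0 r0 t m) +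
    ω (r0 (lst d hd)) (lst d hd) -
    ∑ j ∈ Finset.Icc 2 n, deriv (φ j) (r0 (lst d hd)) *
      Real.sin (2 * π * (S0 d k θ0 j + t * Aj d ω k j (r0 (lst d hd))))

/-- The θ-part of the explicit solution. -/
def thetaSol (d n : ℕ) (hd : 0 < d) (ω : ℝ → Fin d → ℝ) (k : ℕ → Fin (d - 1) → ℤ)
    (φ : ℕ → ℝ → ℝ) (θ0 r0 : Fin d → ℝ) (t : ℝ) (i : Fin d) : ℝ :=
  if i = lst d hd then θ0 i + ∫ u in (0:ℝ)..t, gFun d n hd ω k φ θ0 r0 u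
  else θ0 i + t * ω (r0 (lst d hd)) i

lemma psiSol_hasDerivAt (ω : ℝ → Fin d → ℝ) (k : ℕ → Fin (d - 1) → ℤ)
    (θ0 : Fin d → ℝ) (s : ℝ) (j : ℕ) (t : ℝ) :
    HasDerivAt (psiSol d ω k θ0 s j)
      (2 * π * Real.cos (2 * π * (S0 d k θ0 j + t * Aj d ω k j s))) t := by
  set S := S0 d k θ0 j with hSdef
  set A := Aj d ω k j s with hAdef
  have hSsum : (∑ i', (k j i' : ℝ) * θ0 (emb d i')) = S := rfl
  by_cases hA : A = 0
  · have hfun : psiSol d ω k θ0 s j = fun u : ℝ => 2 * π * u * Real.cos (2 * π * S) := by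
      funext u; simp [psiSol, ← hAdef, hA, hSsum]
    rw [hfun]
    have := ((hasDerivAt_id t).const_mul (2 * π)).mul_const (Real.cos (2 * π * S))
    simpa [hA] using this
  · have hfun : psiSol d ω k θ0 s j =
        fun u : ℝ => (Real.sin (2 * π * S + 2 * π * u * A) - Real.sin (2 * π * S)) / A := by
      funext u; simp [psiSol, ← hAdef, hA, hSsum]
    rw [hfun]
    have hin : HasDerivAt (fun u : ℝ => 2 * π * S + 2 * π * u * A) (2 * π * A) t := by
      simpa using (((hasDerivAt_id t).const_mul (2 * π)).mul_const A).const_add (2 * π * S)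
    have h1 := (((Real.hasDerivAt_sin (2 * π * S + 2 * π * t * A)).comp t hin).sub_const
      (Real.sin (2 * π * S))).div_const A
    have heq : Real.cos (2 * π * S + 2 * π * t * A) * (2 * π * A) / A
        = 2 * π * Real.cos (2 * π * (S + t * A)) := by
      rw [show 2 * π * (S + t * A) = 2 * π * S + 2 * π * t * A by ring]
      field_simp
    rw [← heq]
    exact h1

lemma psiSol_continuous (ω : ℝ → Fin d → ℝ) (k : ℕ → Fin (d - 1) → ℤ)
    (θ0 : Fin d → ℝ) (s : ℝ) (j : ℕ) :
    Continuous (fun t => psiSol d ω k θ0 s j t) := by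
  by_cases hA : Aj d ω k j s = 0 <;> simp only [psiSol, hA, if_true, if_false] <;> fun_prop

lemma rSol_continuous (hd : 0 < d) (ω : ℝ → Fin d → ℝ) (k : ℕ → Fin (d - 1) → ℤ)
    (φ : ℕ → ℝ → ℝ) (θ0 r0 : Fin d → ℝ) (m : Fin d) :
    Continuous (fun t => rSol d n hd ω k φ θ0 r0 t m) := by
  by_cases h : (m : ℕ) < d - 1
  · simp only [rSol, dif_pos h]
    refine continuous_const.add (continuous_finset_sum _ fun j _ => ?_)
    exact (continuous_const.mul (psiSol_continuous ω k θ0 _ j)).mul continuous_const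
  · simp only [rSol, dif_neg h]; exact continuous_const

lemma gFun_continuous (hd : 0 < d) (ω : ℝ → Fin d → ℝ) (k : ℕ → Fin (d - 1) → ℤ)
    (φ : ℕ → ℝ → ℝ) (θ0 r0 : Fin d → ℝ) :
    Continuous (gFun d n hd ω k φ θ0 r0) := by
  unfold gFun
  refine ((continuous_finset_sum _ fun m _ => continuous_const.mul
    (rSol_continuous hd ω k φ θ0 r0 m)).add continuous_const).sub
    (continuous_finset_sum _ fun j _ => continuous_const.mul ?_)
  fun_prop

lemma fderiv_line {d : ℕ} (H : Phase d → ℝ) (z v : Phase d)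
    (hH : DifferentiableAt ℝ H z) {c : ℝ}
    (h : HasDerivAt (fun ε : ℝ => H (z + ε • v)) c 0) :
    fderiv ℝ H z v = c := by
  have hline : HasDerivAt (fun ε : ℝ => z + ε • v) v 0 := by
    simpa using ((hasDerivAt_id (0:ℝ)).smul_const v).const_add z
  have hz : z + (0:ℝ) • v = z := by simp
  have h2 : HasDerivAt (fun ε : ℝ => H (z + ε • v)) (fderiv ℝ H z v) 0 := by
    have := (hz ▸ hH.hasFDerivAt).comp_hasDerivAt 0 hline
    simpa [Function.comp_def] using this
  exact h2.unique h

lemma omega_apply_contDiff (ω : ℝ → Fin d → ℝ) (hω : ContDiff ℝ 1 ω) (m : Fin d) :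
    ContDiff ℝ 1 (fun s => ω s m) :=
  (ContinuousLinearMap.proj m : (Fin d → ℝ) →L[ℝ] ℝ).contDiff.comp hω

lemma proj2_diff (m : Fin d) : Differentiable ℝ (fun z : Phase d => z.2 m) := by
  fun_prop

lemma proj1_diff (m : Fin d) : Differentiable ℝ (fun z : Phase d => z.1 m) := by
  fun_prop

lemma hn_differentiable (hd : 0 < d) (ω : ℝ → Fin d → ℝ) (hω : ContDiff ℝ 1 ω)
    (k : ℕ → Fin (d - 1) → ℤ) (φ : ℕ → ℝ → ℝ)
    (hφ : ∀ j ∈ Finset.Icc 2 n, ContDiff ℝ 1 (φ j)) :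
    Differentiable ℝ (Hn d n hd ω k φ) := by
  unfold Hn
  refine Differentiable.sub ?_ ?_
  · refine Differentiable.fun_sum fun m _ => ?_
    exact (((omega_apply_contDiff ω hω m).differentiable one_ne_zero).comp
      (proj2_diff (lst d hd))).mul (proj2_diff m)
  · refine Differentiable.fun_sum fun j hj => ?_
    refine ((((hφ j hj).differentiable one_ne_zero).comp (proj2_diff (lst d hd))).mul ?_)
    refine Real.differentiable_sin.comp ?_
    exact (differentiable_const _).mul (Differentiable.fun_sum fun i' _ =>
      (differentiable_const _).mul (proj1_diff (emb d i')))

section FderivComp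

variable (hd : 0 < d) (ω : ℝ → Fin d → ℝ) (k : ℕ → Fin (d - 1) → ℤ) (φ : ℕ → ℝ → ℝ)

/-- Directional derivative in the direction of `r_i`, `i < d - 1`. -/
lemma fderiv_dir_r_emb (hω : ContDiff ℝ 1 ω) (hφ : ∀ j ∈ Finset.Icc 2 n, ContDiff ℝ 1 (φ j))
    (z : Phase d) (i : Fin (d - 1)) :
    fderiv ℝ (Hn d n hd ω k φ) z (((0 : Fin d → ℝ), (Pi.single (emb d i) 1 : Fin d → ℝ)) : Phase d)
      = ω (z.2 (lst d hd)) (emb d i) := by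
  apply fderiv_line _ _ _ ((hn_differentiable hd ω hω k φ hφ) z)
  have hfun : (fun ε : ℝ => Hn d n hd ω k φ (z + ε • (((0 : Fin d → ℝ), (Pi.single (emb d i) 1 : Fin d → ℝ)) : Phase d)))
      = fun ε : ℝ => ((∑ m, ω (z.2 (lst d hd)) m * z.2 m) -
          ∑ j ∈ Finset.Icc 2 n, φ j (z.2 (lst d hd)) *
            Real.sin (2 * π * ∑ i', (k j i' : ℝ) * z.1 (emb d i')))
        + ε * ω (z.2 (lst d hd)) (emb d i) := by
    funext ε
    have hl : z.2 (lst d hd) + ε * (Pi.single (emb d i) 1 : Fin d → ℝ) (lst d hd) = z.2 (lst d hd) := by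
      rw [Pi.single_eq_of_ne (Ne.symm (emb_ne_lst hd i))]; ring
    simp only [Hn, Prod.fst_add, Prod.snd_add, Prod.smul_mk, Pi.add_apply, Pi.smul_apply,
      smul_eq_mul, smul_zero, Pi.zero_apply, add_zero, mul_zero, hl]
    have hsum : (∑ m, ω (z.2 (lst d hd)) m * (z.2 m + ε * (Pi.single (emb d i) 1 : Fin d → ℝ) m))
        = (∑ m, ω (z.2 (lst d hd)) m * z.2 m) + ε * ω (z.2 (lst d hd)) (emb d i) := by
      simp only [mul_add, Finset.sum_add_distrib, Pi.single_apply, mul_ite, mul_one, mul_zero,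
        Finset.sum_ite_eq', Finset.mem_univ, if_true]
      ring
    rw [hsum]; ring
  rw [hfun]
  simpa using ((hasDerivAt_id (0:ℝ)).mul_const (ω (z.2 (lst d hd)) (emb d i))).const_add ((∑ m, ω (z.2 (lst d hd)) m * z.2 m) -
    ∑ j ∈ Finset.Icc 2 n, φ j (z.2 (lst d hd)) * Real.sin (2 * π * ∑ i', (k j i' : ℝ) * z.1 (emb d i')))

/-- Directional derivative in the direction of `r_d`. -/
lemma fderiv_dir_r_lst (hω : ContDiff ℝ 1 ω) (hφ : ∀ j ∈ Finset.Icc 2 n, ContDiff ℝ 1 (φ j))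
    (z : Phase d) :
    fderiv ℝ (Hn d n hd ω k φ) z (((0 : Fin d → ℝ), (Pi.single (lst d hd) 1 : Fin d → ℝ)) : Phase d)
      = (∑ m, deriv (fun u => ω u m) (z.2 (lst d hd)) * z.2 m) + ω (z.2 (lst d hd)) (lst d hd)
        - ∑ j ∈ Finset.Icc 2 n, deriv (φ j) (z.2 (lst d hd)) *
            Real.sin (2 * π * ∑ i', (k j i' : ℝ) * z.1 (emb d i')) := by
  apply fderiv_line _ _ _ ((hn_differentiable hd ω hω k φ hφ) z)
  set s := z.2 (lst d hd) with hs
  have hfun : (fun ε : ℝ => Hn d n hd ω k φ (z + ε • (((0 : Fin d → ℝ), (Pi.single (lst d hd) 1 : Fin d → ℝ)) : Phase d)))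
      = fun ε : ℝ => (∑ m, ω (s + ε) m * (z.2 m + ε * (Pi.single (lst d hd) 1 : Fin d → ℝ) m)) -
          ∑ j ∈ Finset.Icc 2 n, φ j (s + ε) *
            Real.sin (2 * π * ∑ i', (k j i' : ℝ) * z.1 (emb d i')) := by
    funext ε
    have hl : z.2 (lst d hd) + ε * (Pi.single (lst d hd) 1 : Fin d → ℝ) (lst d hd) = s + ε := by
      rw [Pi.single_eq_same]; ring
    simp only [Hn, Prod.fst_add, Prod.snd_add, Prod.smul_mk, Pi.add_apply, Pi.smul_apply,
      smul_eq_mul, smul_zero, Pi.zero_apply, add_zero, mul_zero, hl]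
  rw [hfun]
  have hcomp : ∀ f : ℝ → ℝ, ContDiff ℝ 1 f →
      HasDerivAt (fun ε : ℝ => f (s + ε)) (deriv f s) 0 := by
    intro f hf
    have h0 : HasDerivAt f (deriv f s) (s + 0) := by
      simpa using ((hf.differentiable one_ne_zero) s).hasDerivAt
    exact h0.comp_const_add s 0
  have hterm : ∀ m : Fin d, HasDerivAt
      (fun ε : ℝ => ω (s + ε) m * (z.2 m + ε * (Pi.single (lst d hd) 1 : Fin d → ℝ) m))
      (deriv (fun u => ω u m) s * z.2 m + ω s m * (Pi.single (lst d hd) 1 : Fin d → ℝ) m) 0 := by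
    intro m
    have h1 := hcomp (fun u => ω u m) (omega_apply_contDiff ω hω m)
    have h2 : HasDerivAt (fun ε : ℝ => z.2 m + ε * (Pi.single (lst d hd) 1 : Fin d → ℝ) m)
        ((Pi.single (lst d hd) 1 : Fin d → ℝ) m) 0 := by
      simpa using ((hasDerivAt_id (0:ℝ)).mul_const ((Pi.single (lst d hd) 1 : Fin d → ℝ) m)).const_add (z.2 m)
    simpa [Pi.mul_def] using h1.mul h2
  have hsum := HasDerivAt.fun_sum (fun m (_ : m ∈ Finset.univ) => hterm m)
  have hterm2 : ∀ j ∈ Finset.Icc 2 n, HasDerivAt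
      (fun ε : ℝ => φ j (s + ε) * Real.sin (2 * π * ∑ i', (k j i' : ℝ) * z.1 (emb d i')))
      (deriv (φ j) s * Real.sin (2 * π * ∑ i', (k j i' : ℝ) * z.1 (emb d i'))) 0 := by
    intro j hj
    exact (hcomp (φ j) (hφ j hj)).mul_const _
  have hsum2 := HasDerivAt.fun_sum hterm2
  have := hsum.sub hsum2
  have heq : (∑ m, (deriv (fun u => ω u m) s * z.2 m + ω s m * (Pi.single (lst d hd) 1 : Fin d → ℝ) m))
      = (∑ m, deriv (fun u => ω u m) s * z.2 m) + ω s (lst d hd) := by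
    rw [Finset.sum_add_distrib]
    congr 1
    simp [Pi.single_apply, mul_ite]
  rw [heq] at this
  exact this

/-- Directional derivative in the direction of `θ_i`, `i < d - 1`. -/
lemma fderiv_dir_th_emb (hω : ContDiff ℝ 1 ω) (hφ : ∀ j ∈ Finset.Icc 2 n, ContDiff ℝ 1 (φ j))
    (z : Phase d) (i : Fin (d - 1)) :
    fderiv ℝ (Hn d n hd ω k φ) z (((Pi.single (emb d i) 1 : Fin d → ℝ), (0 : Fin d → ℝ)) : Phase d)
      = -∑ j ∈ Finset.Icc 2 n, φ j (z.2 (lst d hd)) *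
          (Real.cos (2 * π * ∑ i', (k j i' : ℝ) * z.1 (emb d i')) * (2 * π * (k j i : ℝ))) := by
  apply fderiv_line _ _ _ ((hn_differentiable hd ω hω k φ hφ) z)
  have hfun : (fun ε : ℝ => Hn d n hd ω k φ (z + ε • (((Pi.single (emb d i) 1 : Fin d → ℝ), (0 : Fin d → ℝ)) : Phase d)))
      = fun ε : ℝ => (∑ m, ω (z.2 (lst d hd)) m * z.2 m) -
          ∑ j ∈ Finset.Icc 2 n, φ j (z.2 (lst d hd)) *
            Real.sin (2 * π * ∑ i', (k j i' : ℝ) * z.1 (emb d i') + ε * (2 * π * (k j i : ℝ))) := by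
    funext ε
    simp only [Hn, Prod.fst_add, Prod.snd_add, Prod.smul_mk, Pi.add_apply, Pi.smul_apply,
      smul_eq_mul, smul_zero, Pi.zero_apply, add_zero, mul_zero]
    congr 1
    refine Finset.sum_congr rfl fun j _ => ?_
    congr 2
    have hsum : (∑ i', (k j i' : ℝ) * (z.1 (emb d i') + ε * (Pi.single (emb d i) 1 : Fin d → ℝ) (emb d i')))
        = (∑ i', (k j i' : ℝ) * z.1 (emb d i')) + ε * (k j i : ℝ) := by
      have hsingle : ∀ i' : Fin (d - 1), (Pi.single (emb d i) 1 : Fin d → ℝ) (emb d i')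
          = if i' = i then 1 else 0 := by
        intro i'
        rw [Pi.single_apply]
        simp [emb_inj.eq_iff]
      simp only [hsingle, mul_add, Finset.sum_add_distrib, mul_ite, mul_one, mul_zero,
        Finset.sum_ite_eq', Finset.mem_univ, if_true]
      ring
    rw [hsum]; ring
  rw [hfun]
  refine HasDerivAt.const_sub _ (HasDerivAt.fun_sum fun j _ => ?_)
  have hin : HasDerivAt (fun ε : ℝ => 2 * π * ∑ i', (k j i' : ℝ) * z.1 (emb d i')
      + ε * (2 * π * (k j i : ℝ))) (2 * π * (k j i : ℝ)) 0 := by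
    simpa using ((hasDerivAt_id (0:ℝ)).mul_const (2 * π * (k j i : ℝ))).const_add
      (2 * π * ∑ i', (k j i' : ℝ) * z.1 (emb d i'))
  have hsin := (Real.hasDerivAt_sin (2 * π * ∑ i', (k j i' : ℝ) * z.1 (emb d i')
      + 0 * (2 * π * (k j i : ℝ)))).comp 0 hin
  have := hsin.const_mul (φ j (z.2 (lst d hd)))
  simpa using this

/-- Directional derivative in the direction of `θ_d`. -/
lemma fderiv_dir_th_lst (hω : ContDiff ℝ 1 ω) (hφ : ∀ j ∈ Finset.Icc 2 n, ContDiff ℝ 1 (φ j))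
    (z : Phase d) :
    fderiv ℝ (Hn d n hd ω k φ) z (((Pi.single (lst d hd) 1 : Fin d → ℝ), (0 : Fin d → ℝ)) : Phase d) = 0 := by
  apply fderiv_line _ _ _ ((hn_differentiable hd ω hω k φ hφ) z)
  have hfun : (fun ε : ℝ => Hn d n hd ω k φ (z + ε • (((Pi.single (lst d hd) 1 : Fin d → ℝ), (0 : Fin d → ℝ)) : Phase d)))
      = fun _ : ℝ => Hn d n hd ω k φ z := by
    funext ε
    have hz : ∀ i' : Fin (d - 1), (Pi.single (lst d hd) 1 : Fin d → ℝ) (emb d i') = 0 :=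
      fun i' => Pi.single_eq_of_ne (emb_ne_lst hd i') _
    simp only [Hn, Prod.fst_add, Prod.snd_add, Prod.smul_mk, Pi.add_apply, Pi.smul_apply,
      smul_eq_mul, smul_zero, Pi.zero_apply, add_zero, mul_zero, hz]
  rw [hfun]
  exact hasDerivAt_const 0 _

end FderivComp

end Aux


/-- The solution of Hamilton's equations for `H_n` with initial
condition `(θ₀, r₀)` is defined for all `t ∈ ℝ` and satisfies
`θ̃(t) = θ̃₀ + t ω̃(s)`, `r_d(t) = s` and
`r̃(t) = r̃₀ + Σ_{j=2}^n φ_j(s) ψ_j(t) k_j`, where `s = (r₀)_d`. -/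
theorem statement17 (d n : ℕ) (hd : 2 ≤ d) (hn : 2 ≤ n)
    (ω : ℝ → Fin d → ℝ) (hω : ContDiff ℝ 1 ω)
    (k : ℕ → Fin (d - 1) → ℤ)
    (φ : ℕ → ℝ → ℝ) (hφ : ∀ j ∈ Finset.Icc 2 n, ContDiff ℝ 1 (φ j))
    (θ0 r0 : Fin d → ℝ) :
    ∃ θ r : ℝ → Fin d → ℝ,
      IsSolutionOn (Hn d n (by omega) ω k φ) θ r Set.univ ∧
      θ 0 = θ0 ∧ r 0 = r0 ∧
      (∀ t : ℝ, ∀ i : Fin (d - 1),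
        θ t (emb d i) = θ0 (emb d i) + t * ω (r0 (lst d (by omega))) (emb d i)) ∧
      (∀ t : ℝ, r t (lst d (by omega)) = r0 (lst d (by omega))) ∧
      (∀ t : ℝ, ∀ i : Fin (d - 1),
        r t (emb d i) = r0 (emb d i) + ∑ j ∈ Finset.Icc 2 n,
          φ j (r0 (lst d (by omega))) *
            psiSol d ω k θ0 (r0 (lst d (by omega))) j t * (k j i : ℝ)) := by
  have hd0 : 0 < d := by omega
  have hlstcond : ¬ ((lst d hd0 : ℕ) < d - 1) := by simp [lst]
  have hrlst : ∀ t : ℝ, rSol d n hd0 ω k φ θ0 r0 t (lst d hd0) = r0 (lst d hd0) := by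
    intro t; simp only [rSol, dif_neg hlstcond]
  have hS : ∀ (j : ℕ) (t : ℝ),
      (∑ i', (k j i' : ℝ) * thetaSol d n hd0 ω k φ θ0 r0 t (emb d i'))
        = S0 d k θ0 j + t * Aj d ω k j (r0 (lst d hd0)) := by
    intro j t
    unfold S0 Aj
    rw [Finset.mul_sum, ← Finset.sum_add_distrib]
    refine Finset.sum_congr rfl fun i' _ => ?_
    simp only [thetaSol, if_neg (emb_ne_lst hd0 i')]
    ring
  have hgc := gFun_continuous (n := n) hd0 ω k φ θ0 r0
  -- derivative of the `θ̃` coordinates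
  have hthder : ∀ (i' : Fin (d - 1)) (t : ℝ),
      HasDerivAt (fun u => thetaSol d n hd0 ω k φ θ0 r0 u (emb d i'))
        (ω (r0 (lst d hd0)) (emb d i')) t := by
    intro i' t
    simp only [thetaSol, if_neg (emb_ne_lst hd0 i')]
    simpa using ((hasDerivAt_id t).mul_const (ω (r0 (lst d hd0)) (emb d i'))).const_add
      (θ0 (emb d i'))
  -- derivative of `θ_d`
  have hthlstder : ∀ t : ℝ,
      HasDerivAt (fun u => thetaSol d n hd0 ω k φ θ0 r0 u (lst d hd0))
        (gFun d n hd0 ω k φ θ0 r0 t) t := by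
    intro t
    simp only [thetaSol, if_pos rfl]
    refine HasDerivAt.const_add _ ?_
    exact intervalIntegral.integral_hasDerivAt_right (hgc.intervalIntegrable _ _)
      (hgc.stronglyMeasurableAtFilter _ _) hgc.continuousAt
  -- derivative of the `r̃` coordinates
  have hrder : ∀ (i' : Fin (d - 1)) (t : ℝ),
      HasDerivAt (fun u => rSol d n hd0 ω k φ θ0 r0 u (emb d i'))
        (∑ j ∈ Finset.Icc 2 n, φ j (r0 (lst d hd0)) *
          (2 * π * Real.cos (2 * π * (S0 d k θ0 j + t * Aj d ω k j (r0 (lst d hd0)))))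
            * (k j i' : ℝ)) t := by
    intro i' t
    have hcond : ((emb d i' : ℕ)) < d - 1 := i'.2
    simp only [rSol, dif_pos hcond]
    refine HasDerivAt.const_add _ (HasDerivAt.fun_sum fun j _ => ?_)
    exact (HasDerivAt.const_mul (φ j (r0 (lst d hd0)))
      (psiSol_hasDerivAt ω k θ0 (r0 (lst d hd0)) j t)).mul_const _
  refine ⟨thetaSol d n hd0 ω k φ θ0 r0, rSol d n hd0 ω k φ θ0 r0, ?_, ?_, ?_, ?_, ?_, ?_⟩
  · -- Hamilton's equations
    intro t _ i
    by_cases h : (i : ℕ) < d - 1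
    · have hemb : emb d ⟨(i : ℕ), h⟩ = i := rfl
      rw [← hemb]
      constructor
      · rw [fderiv_dir_r_emb hd0 ω k φ hω hφ]
        simp only [hrlst]
        exact (hthder ⟨(i : ℕ), h⟩ t).hasDerivWithinAt
      · rw [fderiv_dir_th_emb hd0 ω k φ hω hφ, neg_neg]
        simp only [hS, hrlst]
        have heq : (∑ j ∈ Finset.Icc 2 n, φ j (r0 (lst d hd0)) *
              (2 * π * Real.cos (2 * π * (S0 d k θ0 j + t * Aj d ω k j (r0 (lst d hd0)))))
                * (k j ⟨(i : ℕ), h⟩ : ℝ))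
            = ∑ j ∈ Finset.Icc 2 n, φ j (r0 (lst d hd0)) *
              (Real.cos (2 * π * (S0 d k θ0 j + t * Aj d ω k j (r0 (lst d hd0))))
                * (2 * π * (k j ⟨(i : ℕ), h⟩ : ℝ))) :=
          Finset.sum_congr rfl fun j _ => by ring
        exact (heq ▸ (hrder ⟨(i : ℕ), h⟩ t)).hasDerivWithinAt
    · have hilst : i = lst d hd0 := by
        have h2 := i.2
        exact Fin.ext (by simp only [lst]; omega)
      subst hilst
      constructor
      · rw [fderiv_dir_r_lst hd0 ω k φ hω hφ]
        simp only [hS, hrlst]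
        exact (hthlstder t).hasDerivWithinAt
      · rw [fderiv_dir_th_lst hd0 ω k φ hω hφ, neg_zero]
        simp only [rSol, dif_neg hlstcond]
        exact (hasDerivAt_const t _).hasDerivWithinAt
  · -- θ 0 = θ0
    funext i
    by_cases hi : i = lst d hd0
    · simp [thetaSol, hi]
    · simp [thetaSol, hi]
  · -- r 0 = r0
    have hpsi0 : ∀ j, psiSol d ω k θ0 (r0 (lst d hd0)) j 0 = 0 := by
      intro j
      by_cases hA : Aj d ω k j (r0 (lst d hd0)) = 0 <;> simp [psiSol, hA]
    funext i
    by_cases hi : (i : ℕ) < d - 1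
    · simp [rSol, hi, hpsi0]
    · simp [rSol, hi]
  · -- θ̃ formula
    intro t i
    simp only [thetaSol, if_neg (emb_ne_lst hd0 i)]
  · -- r_d formula
    exact hrlst
  · -- r̃ formula
    intro t i
    have hcond : ((emb d i : ℕ)) < d - 1 := i.2
    simp only [rSol, dif_pos hcond]
    rfl
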